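/- Let K be the attractor of an IFS of similarities with common factor c ∈ (0,1), equipped with its natural fractal structure. Then N_n(K) = k^n and δ(K, Γ_n) = c^n diam(K), hence the limit defining fractal dimension II, lim_{n→∞} log N_n(K)/(−log δ(K,Γ_n)), exists and equals −log k/log c (assuming diam(K) > 0). -/

import Mathlib

open Metric Set Filter Topology MeasureTheory ENNReal NNReal

noncomputable section

/-- A map is a similarity with factor `c` if it scales all distances exactly by `c`. -/
def IsSimilarity {X : Type*} [MetricSpace X] (f : X → X) (c : ℝ) : Prop :=
  ∀ x y, dist (f x) (f y) = c * dist x y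

/-- Composition `f_{ω₁} ∘ ⋯ ∘ f_{ω_n}` of the maps of an IFS along a word `ω`. -/
def wordComp {X : Type*} {k : ℕ} (f : Fin k → X → X) {n : ℕ} (ω : Fin n → Fin k) : X → X :=
  (List.ofFn fun i => f (ω i)).foldr (· ∘ ·) id

/-- Number of elements of level `Γ_n` of the natural fractal structure (counted with
multiplicity over words) that meet `K`. -/
def levelCount {X : Type*} [MetricSpace X] {k : ℕ} (f : Fin k → X → X) (K : Set X)
    (n : ℕ) : ℕ :=
  Set.ncard {ω : Fin n → Fin k | ((wordComp f ω '' K) ∩ K).Nonempty}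

/-- `δ(K, Γ_n)`: supremum of diameters of the elements of level `Γ_n` meeting `K`. -/
def deltaLevel {X : Type*} [MetricSpace X] {k : ℕ} (f : Fin k → X → X) (K : Set X)
    (n : ℕ) : ℝ :=
  sSup {d : ℝ | ∃ ω : Fin n → Fin k, ((wordComp f ω '' K) ∩ K).Nonempty ∧
    d = Metric.diam (wordComp f ω '' K)}

/-- `N_δ(K)`: the largest number of disjoint closed balls of radius `δ` with centres in `K`. -/
def packingNum {X : Type*} [MetricSpace X] (K : Set X) (δ : ℝ) : ℕ :=
  sSup {m : ℕ | ∃ t : Finset X, t.card = m ∧ ↑t ⊆ K ∧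
    (t : Set X).Pairwise fun x y => Disjoint (Metric.closedBall x δ) (Metric.closedBall y δ)}

/-- The pre-measure `H^s_{n,3}(K)`: infimum over whole levels `m ≥ n` of the sum of the
`s`-th powers of the diameters of all elements of that level (with multiplicity). -/
def H3pre {X : Type*} [MetricSpace X] {k : ℕ} (f : Fin k → X → X) (K : Set X)
    (s : ℝ) (n : ℕ) : ℝ≥0∞ :=
  ⨅ m : {m : ℕ // n ≤ m}, ∑ ω : Fin m.1 → Fin k,
    ENNReal.ofReal (Metric.diam (wordComp f ω '' K)) ^ s

/-- `H^s_3(K)`: the (monotone) limit of `H^s_{n,3}(K)` as `n → ∞`. -/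
def H3 {X : Type*} [MetricSpace X] {k : ℕ} (f : Fin k → X → X) (K : Set X) (s : ℝ) : ℝ≥0∞ :=
  ⨆ n : ℕ, H3pre f K s n

/-- `H^s_4(K)`: limit over `n` of the infimum over finite covers of `K` by elements of
levels `≥ n` of the natural fractal structure. -/
def H4 {X : Type*} [MetricSpace X] {k : ℕ} (f : Fin k → X → X) (K : Set X) (s : ℝ) : ℝ≥0∞ :=
  ⨆ n : ℕ, ⨅ (𝒜 : Set (Set X)) (_ : 𝒜.Finite ∧
      (∀ A ∈ 𝒜, ∃ m, n ≤ m ∧ ∃ ω : Fin m → Fin k, A = wordComp f ω '' K) ∧ K ⊆ ⋃₀ 𝒜),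
    ∑' A : 𝒜, ENNReal.ofReal (Metric.diam (A : Set X)) ^ s

/-- `H^s_5(K)`: limit over `n` of the infimum over countable covers of `K` by elements of
levels `≥ n` of the natural fractal structure. -/
def H5 {X : Type*} [MetricSpace X] {k : ℕ} (f : Fin k → X → X) (K : Set X) (s : ℝ) : ℝ≥0∞ :=
  ⨆ n : ℕ, ⨅ (𝒜 : Set (Set X)) (_ : 𝒜.Countable ∧
      (∀ A ∈ 𝒜, ∃ m, n ≤ m ∧ ∃ ω : Fin m → Fin k, A = wordComp f ω '' K) ∧ K ⊆ ⋃₀ 𝒜),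
    ∑' A : 𝒜, ENNReal.ofReal (Metric.diam (A : Set X)) ^ s

/-- `H^s_6(K)`: limit as `δ → 0` of the infimum over countable covers of `K` by
fractal-structure elements of diameter at most `δ`. -/
def H6 {X : Type*} [MetricSpace X] {k : ℕ} (f : Fin k → X → X) (K : Set X) (s : ℝ) : ℝ≥0∞ :=
  ⨆ (δ : ℝ) (_ : 0 < δ), ⨅ (𝒜 : Set (Set X)) (_ : 𝒜.Countable ∧
      (∀ A ∈ 𝒜, (∃ m, ∃ ω : Fin m → Fin k, A = wordComp f ω '' K) ∧ Metric.diam A ≤ δ) ∧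
      K ⊆ ⋃₀ 𝒜),
    ∑' A : 𝒜, ENNReal.ofReal (Metric.diam (A : Set X)) ^ s

/-- The open set condition for a family of self-maps of `ℝ^d`. -/
def OSC {d k : ℕ} (f : Fin k → EuclideanSpace ℝ (Fin d) → EuclideanSpace ℝ (Fin d)) : Prop :=
  ∃ V : Set (EuclideanSpace ℝ (Fin d)), V.Nonempty ∧ IsOpen V ∧ Bornology.IsBounded V ∧
    (∀ i, f i '' V ⊆ V) ∧ Pairwise fun i j => Disjoint (f i '' V) (f j '' V)

lemma wordComp_zero {X : Type*} {k : ℕ} (f : Fin k → X → X) (ω : Fin 0 → Fin k) :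
    wordComp f ω = id := rfl

lemma wordComp_succ {X : Type*} {k : ℕ} (f : Fin k → X → X) {n : ℕ}
    (ω : Fin (n + 1) → Fin k) :
    wordComp f ω = f (ω 0) ∘ wordComp f (fun i => ω i.succ) := by
  unfold wordComp
  rw [List.ofFn_succ]
  rfl

lemma wordComp_similarity {X : Type*} [MetricSpace X] {k : ℕ} (f : Fin k → X → X)
    (c : ℝ) (hf : ∀ i, IsSimilarity (f i) c) {n : ℕ} (ω : Fin n → Fin k) :
    ∀ x y, dist (wordComp f ω x) (wordComp f ω y) = c ^ n * dist x y := by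
  induction n with
  | zero => intro x y; simp [wordComp_zero]
  | succ n ih =>
    intro x y
    rw [wordComp_succ]
    simp only [Function.comp_apply]
    rw [hf (ω 0), ih (fun i => ω i.succ)]
    ring

lemma wordComp_image_subset {X : Type*} [MetricSpace X] {k : ℕ} (f : Fin k → X → X)
    (K : Set X) (hK : K = ⋃ i, f i '' K) {n : ℕ} (ω : Fin n → Fin k) :
    wordComp f ω '' K ⊆ K := by
  have hsub : ∀ i, f i '' K ⊆ K := fun i => by
    conv_rhs => rw [hK]
    exact Set.subset_iUnion (fun i => f i '' K) i
  induction n with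
  | zero => simp [wordComp_zero]
  | succ n ih =>
    rw [wordComp_succ, Set.image_comp]
    exact (Set.image_mono (ih (fun i => ω i.succ))).trans (hsub (ω 0))

lemma diam_similarity_image {X : Type*} [MetricSpace X] (g : X → X) (r : ℝ) (hr : 0 < r)
    (hg : ∀ x y, dist (g x) (g y) = r * dist x y) (K : Set X)
    (hb : Bornology.IsBounded K) : Metric.diam (g '' K) = r * Metric.diam K := by
  have hb' : Bornology.IsBounded (g '' K) := by
    rw [Metric.isBounded_iff]
    refine ⟨r * Metric.diam K, ?_⟩
    rintro _ ⟨a, ha, rfl⟩ _ ⟨b, hb2, rfl⟩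
    rw [hg]
    exact mul_le_mul_of_nonneg_left (Metric.dist_le_diam_of_mem hb ha hb2) hr.le
  apply le_antisymm
  · apply Metric.diam_le_of_forall_dist_le (by positivity)
    rintro _ ⟨a, ha, rfl⟩ _ ⟨b, hb2, rfl⟩
    rw [hg]
    exact mul_le_mul_of_nonneg_left (Metric.dist_le_diam_of_mem hb ha hb2) hr.le
  · have h1 : Metric.diam K ≤ Metric.diam (g '' K) / r := by
      apply Metric.diam_le_of_forall_dist_le (by positivity)
      intro a ha b hb2
      rw [le_div_iff₀ hr, mul_comm, ← hg]
      exact Metric.dist_le_diam_of_mem hb' ⟨a, ha, rfl⟩ ⟨b, hb2, rfl⟩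
    calc r * Metric.diam K ≤ r * (Metric.diam (g '' K) / r) := by gcongr
      _ = Metric.diam (g '' K) := by field_simp

/-- for an attractor of an IFS with common factor `c`, `N_n(K) = k^n`,
`δ(K,Γ_n) = c^n · diam K`, and the fractal dimension II limit exists and equals
`-log k / log c`. -/
theorem dim2_formula {X : Type*} [MetricSpace X] [CompleteSpace X]
    {k : ℕ} (hk : 0 < k) (f : Fin k → X → X) (c : ℝ) (hc : c ∈ Set.Ioo (0 : ℝ) 1)
    (hf : ∀ i, IsSimilarity (f i) c)
    (K : Set X) (hne : K.Nonempty) (hcpt : IsCompact K) (hK : K = ⋃ i, f i '' K)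
    (hdiam : 0 < Metric.diam K) :
    (∀ n : ℕ, levelCount f K n = k ^ n) ∧
      (∀ n : ℕ, deltaLevel f K n = c ^ n * Metric.diam K) ∧
      Filter.Tendsto
        (fun n : ℕ => Real.log (levelCount f K n) / (-Real.log (deltaLevel f K n)))
        Filter.atTop (𝓝 (-Real.log k / Real.log c)) := by
  obtain ⟨hc0, hc1⟩ := hc
  set D := Metric.diam K with hD
  -- every word's image meets K
  have hmeet : ∀ n (ω : Fin n → Fin k), ((wordComp f ω '' K) ∩ K).Nonempty := by
    intro n ω
    obtain ⟨x, hx⟩ := hne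
    exact ⟨wordComp f ω x, Set.mem_image_of_mem _ hx,
      wordComp_image_subset f K hK ω (Set.mem_image_of_mem _ hx)⟩
  have hdiamIm : ∀ n (ω : Fin n → Fin k),
      Metric.diam (wordComp f ω '' K) = c ^ n * D := fun n ω =>
    diam_similarity_image _ _ (pow_pos hc0 n) (wordComp_similarity f c hf ω) K
      hcpt.isBounded
  have h1 : ∀ n : ℕ, levelCount f K n = k ^ n := by
    intro n
    have : {ω : Fin n → Fin k | ((wordComp f ω '' K) ∩ K).Nonempty} = Set.univ := by
      ext ω; simpa using hmeet n ω
    rw [levelCount, this, Set.ncard_univ, Nat.card_eq_fintype_card]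
    simp
  have h2 : ∀ n : ℕ, deltaLevel f K n = c ^ n * D := by
    intro n
    have : {d : ℝ | ∃ ω : Fin n → Fin k, ((wordComp f ω '' K) ∩ K).Nonempty ∧
        d = Metric.diam (wordComp f ω '' K)} = {c ^ n * D} := by
      ext d
      simp only [Set.mem_setOf_eq, Set.mem_singleton_iff]
      constructor
      · rintro ⟨ω, -, rfl⟩; exact hdiamIm n ω
      · rintro rfl
        exact ⟨fun _ => ⟨0, hk⟩, hmeet n _, (hdiamIm n _).symm⟩
    rw [deltaLevel, this, csSup_singleton]
  refine ⟨h1, h2, ?_⟩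
  have hlogc : Real.log c < 0 := Real.log_neg hc0 hc1
  have hDpos : (0 : ℝ) < D := hdiam
  have heq : ∀ n : ℕ,
      Real.log (levelCount f K n) / (-Real.log (deltaLevel f K n)) =
        (n * Real.log k) / (-(n * Real.log c + Real.log D)) := by
    intro n
    rw [h1, h2, Nat.cast_pow, Real.log_pow,
      Real.log_mul (by positivity) hDpos.ne', Real.log_pow]
  rw [show (-Real.log k / Real.log c) = Real.log k / (-Real.log c - 0) by
    rw [sub_zero, div_neg, neg_div]]
  apply Filter.Tendsto.congr' ?_ (Filter.Tendsto.div tendsto_const_nhds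
    (Filter.Tendsto.sub tendsto_const_nhds
      (tendsto_const_div_atTop_nhds_zero_nat (Real.log D)))
    (by rw [sub_zero]; exact (neg_pos.2 hlogc).ne'))
  filter_upwards [Filter.eventually_ge_atTop 1] with n hn
  rw [heq n]
  have hn0 : (n : ℝ) ≠ 0 := Nat.cast_ne_zero.2 (by omega)
  have : -((n : ℝ) * Real.log c + Real.log D) =
      n * (-Real.log c - Real.log D / n) := by field_simp; ring
  rw [this, mul_div_mul_left _ _ hn0]

  rfl
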